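/- For any nonempty finite subset D of a finitely generated group Γ and any real λ with 1 < λ ≤ Card(Γ)/Card(D), the exterior boundary satisfies Card(∂'_S D) ≥ (1 − 1/λ)·Card(D)/φ_S(λ·Card(D)). -/

import Mathlib

open Set Filter

/-- The ball of radius `n` in the word metric: elements expressible as a product
of at most `n` elements of `S`. -/
def wordBall {G : Type*} [Group G] (S : Set G) (n : ℕ) : Set G :=
  {x | ∃ l : List G, l.length ≤ n ∧ (∀ s ∈ l, s ∈ S) ∧ l.prod = x}

/-- The growth function `γ_S(n) = Card(B_S(n))`. -/
noncomputable def growth {G : Type*} [Group G] (S : Set G) (n : ℕ) : ℕ :=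
  (wordBall S n).ncard

/-- The word norm `‖x‖_S`. -/
noncomputable def wordNorm {G : Type*} [Group G] (S : Set G) (x : G) : ℕ :=
  sInf {n | x ∈ wordBall S n}

/-- The reverse growth function `φ_S(t) = min {n | γ_S(n) ≥ t}`. -/
noncomputable def phiS {G : Type*} [Group G] (S : Set G) (t : ℝ) : ℕ :=
  sInf {n | t ≤ (growth S n : ℝ)}

/-- The interior boundary `∂_S D`. -/
def intBoundary {G : Type*} [Group G] (S : Set G) (D : Set G) : Set G :=
  {x ∈ D | ∃ s ∈ S, s * x ∉ D}

/-- The exterior boundary `∂'_S D`. -/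
def extBoundary {G : Type*} [Group G] (S : Set G) (D : Set G) : Set G :=
  {x | x ∉ D ∧ ∃ s ∈ S, s * x ∈ D}

section Aux

variable {G : Type*} [Group G] {S D : Set G} {n : ℕ}

lemma one_mem_wordBall (n : ℕ) : (1 : G) ∈ wordBall S n :=
  ⟨[], by simp, by simp, rfl⟩

lemma wordBall_mono {m n : ℕ} (h : m ≤ n) : wordBall S m ⊆ wordBall S n :=
  fun _ ⟨l, hl, hm, hp⟩ => ⟨l, hl.trans h, hm, hp⟩

lemma wordBall_finite (hS : S.Finite) : ∀ n, (wordBall S n).Finite := by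
  intro n
  induction n with
  | zero =>
    refine Set.Finite.subset (Set.finite_singleton 1) ?_
    rintro x ⟨l, hl, -, rfl⟩
    simp at hl
    simp [hl]
  | succ n ih =>
    refine Set.Finite.subset (ih.union (hS.mul ih)) ?_
    rintro x ⟨l, hl, hm, rfl⟩
    cases l with
    | nil => exact Or.inl (one_mem_wordBall n)
    | cons s t =>
      right
      rw [List.prod_cons]
      exact Set.mul_mem_mul (hm s (by simp)) ⟨t, by simpa using hl, fun a ha => hm a (by simp [ha]), rfl⟩

lemma exists_mem_wordBall (hSsym : ∀ s ∈ S, s⁻¹ ∈ S) (hSgen : Subgroup.closure S = ⊤)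
    (g : G) : ∃ n, g ∈ wordBall S n := by
  have hg : g ∈ Subgroup.closure S := hSgen ▸ Subgroup.mem_top g
  induction hg using Subgroup.closure_induction with
  | mem s hs => exact ⟨1, [s], by simp, by simpa using hs, by simp⟩
  | one => exact ⟨0, one_mem_wordBall 0⟩
  | mul x y hx hy ihx ihy =>
    obtain ⟨m, l, hl, hm, rfl⟩ := ihx
    obtain ⟨n, l', hl', hm', rfl⟩ := ihy
    exact ⟨m + n, l ++ l', by simpa using Nat.add_le_add hl hl',
      by intro s hs; rcases List.mem_append.1 hs with h | h; exacts [hm s h, hm' s h], by simp⟩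
  | inv x hx ihx =>
    obtain ⟨n, l, hl, hm, rfl⟩ := ihx
    refine ⟨n, (l.map Inv.inv).reverse, by simpa using hl, ?_, (List.prod_inv_reverse l).symm⟩
    intro s hs
    simp only [List.mem_reverse, List.mem_map] at hs
    obtain ⟨a, ha, rfl⟩ := hs
    exact hSsym a (hm a ha)

lemma extBoundary_finite (hSfin : S.Finite) (hDfin : D.Finite) :
    (extBoundary S D).Finite := by
  refine Set.Finite.subset ((hSfin.image Inv.inv).mul hDfin) ?_
  rintro x ⟨-, s, hs, hsx⟩
  exact ⟨s⁻¹, Set.mem_image_of_mem _ hs, s * x, hsx, by group⟩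

lemma smul_diff_subset (hSsym : ∀ s ∈ S, s⁻¹ ∈ S) {s : G} (hs : s ∈ S) :
    (fun x => s * x) '' D \ D ⊆ extBoundary S D := by
  rintro z ⟨⟨x, hx, rfl⟩, hz⟩
  exact ⟨hz, s⁻¹, hSsym s hs, by simpa using hx⟩

/-- Telescoping: `|yD \ D| ≤ len(l) * |∂'D|` for `y = l.prod`. -/
lemma telescope (hSfin : S.Finite) (hDfin : D.Finite) (hSsym : ∀ s ∈ S, s⁻¹ ∈ S) :
    ∀ l : List G, (∀ s ∈ l, s ∈ S) →
      ((fun x => l.prod * x) '' D \ D).ncard ≤ l.length * (extBoundary S D).ncard := by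
  intro l
  induction l with
  | nil => intro _; simp
  | cons s t ih =>
    intro hmem
    have hs : s ∈ S := hmem s (by simp)
    have ht : ∀ a ∈ t, a ∈ S := fun a ha => hmem a (by simp [ha])
    have hsub : (fun x => (s :: t).prod * x) '' D \ D ⊆
        (fun x => s * x) '' ((fun x => t.prod * x) '' D \ D) ∪ ((fun x => s * x) '' D \ D) := by
      rintro z ⟨⟨x, hx, rfl⟩, hz⟩
      by_cases h : t.prod * x ∈ D
      · exact Or.inr ⟨⟨t.prod * x, h, by simp [List.prod_cons, mul_assoc]⟩, by
          simpa [List.prod_cons, mul_assoc] using hz⟩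
      · exact Or.inl ⟨t.prod * x, ⟨⟨x, hx, rfl⟩, h⟩, by simp [List.prod_cons, mul_assoc]⟩
    have h1 : ((fun x => s * x) '' ((fun x => t.prod * x) '' D \ D)).ncard =
        ((fun x => t.prod * x) '' D \ D).ncard :=
      Set.ncard_image_of_injective _ (mul_right_injective s)
    have hfin1 : ((fun x => t.prod * x) '' D \ D).Finite := ((hDfin.image _).diff)
    have hfin2 : ((fun x => s * x) '' D \ D).Finite := ((hDfin.image _).diff)
    calc ((fun x => (s :: t).prod * x) '' D \ D).ncard
        ≤ ((fun x => s * x) '' ((fun x => t.prod * x) '' D \ D) ∪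
            ((fun x => s * x) '' D \ D)).ncard :=
          Set.ncard_le_ncard hsub ((hfin1.image _).union hfin2)
      _ ≤ ((fun x => s * x) '' ((fun x => t.prod * x) '' D \ D)).ncard +
            ((fun x => s * x) '' D \ D).ncard := Set.ncard_union_le _ _
      _ ≤ t.length * (extBoundary S D).ncard + (extBoundary S D).ncard := by
          refine Nat.add_le_add ?_ ?_
          · rw [h1]; exact ih ht
          · exact Set.ncard_le_ncard (smul_diff_subset hSsym hs)
              (extBoundary_finite hSfin hDfin)
      _ = (s :: t).length * (extBoundary S D).ncard := by
          simp [List.length_cons, Nat.succ_mul]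

-- if balls stabilize, they equal the whole group
lemma wordBall_stab (hSsym : ∀ s ∈ S, s⁻¹ ∈ S) (hSgen : Subgroup.closure S = ⊤)
    (h : wordBall S (n+1) ⊆ wordBall S n) : wordBall S n = Set.univ := by
  have key : ∀ m, wordBall S m ⊆ wordBall S n := by
    intro m
    induction m with
    | zero => exact wordBall_mono (Nat.zero_le n)
    | succ m ih =>
      rintro x ⟨l, hl, hm, rfl⟩
      cases l with
      | nil => exact one_mem_wordBall n
      | cons s t =>
        have ht : t.prod ∈ wordBall S n :=
          ih ⟨t, by simpa using hl, fun a ha => hm a (by simp [ha]), rfl⟩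
        obtain ⟨l', hl', hm', hp'⟩ := ht
        refine h ⟨s :: l', by simpa using hl', ?_, by simp [hp']⟩
        intro a ha
        rcases List.mem_cons.1 ha with rfl | ha
        · exact hm a (by simp)
        · exact hm' a ha
  ext g
  simp only [Set.mem_univ, iff_true]
  obtain ⟨m, hg⟩ := exists_mem_wordBall hSsym hSgen g
  exact key m hg

lemma growth_exists (hSfin : S.Finite) (hSsym : ∀ s ∈ S, s⁻¹ ∈ S)
    (hSgen : Subgroup.closure S = ⊤) (t : ℝ)
    (hcard : Finite G → t ≤ (Nat.card G : ℝ)) :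
    ∃ n, t ≤ (growth S n : ℝ) := by
  by_cases hG : Finite G
  · cases nonempty_fintype G
    choose f hf using exists_mem_wordBall hSsym hSgen (G := G)
    refine ⟨Finset.univ.sup f, ?_⟩
    have : wordBall S (Finset.univ.sup f) = Set.univ := by
      ext g
      simp only [Set.mem_univ, iff_true]
      exact wordBall_mono (Finset.le_sup (Finset.mem_univ g)) (hf g)
    rw [growth, this, Set.ncard_univ]
    exact hcard hG
  · have hstrict : ∀ n, growth S n < growth S (n+1) := by
      intro n
      have hss : wordBall S n ⊂ wordBall S (n+1) := by
        refine ⟨wordBall_mono (Nat.le_succ n), fun h => hG ?_⟩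
        have := wordBall_stab hSsym hSgen h
        exact Set.finite_univ_iff.1 (this ▸ wordBall_finite hSfin n)
      exact Set.ncard_lt_ncard hss (wordBall_finite hSfin (n+1))
    have hge : ∀ n, n + 1 ≤ growth S n := by
      intro n
      induction n with
      | zero => exact Set.ncard_pos (wordBall_finite hSfin 0) |>.2 ⟨1, one_mem_wordBall 0⟩
      | succ n ih => exact Nat.succ_le_of_lt (lt_of_le_of_lt ih (hstrict n))
    obtain ⟨n, hn⟩ := exists_nat_ge t
    refine ⟨n, hn.trans ?_⟩
    exact_mod_cast (Nat.le_succ n).trans (hge n)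

open scoped Classical in
-- Double counting: there is `y` in the ball with `lam * |D ∩ y⁻¹D| ≤ |D|`.
lemma counting (hBfin : (wordBall S n).Finite) (hDfin : D.Finite)
    {lam : ℝ} (hlam : 0 < lam) (hn : lam * (D.ncard : ℝ) ≤ (growth S n : ℝ)) :
    ∃ y ∈ wordBall S n,
      lam * ((hDfin.toFinset.filter (fun x => y * x ∈ D)).card : ℝ) ≤ (D.ncard : ℝ) := by
  set Df := hDfin.toFinset with hDf
  set Bf := hBfin.toFinset with hBf
  have hDcard : D.ncard = Df.card := Set.ncard_eq_toFinset_card D hDfin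
  have hBcard : growth S n = Bf.card := by
    rw [growth, Set.ncard_eq_toFinset_card _ hBfin]
  have hsum : ∑ y ∈ Bf, (Df.filter (fun x => y * x ∈ D)).card ≤ Df.card * Df.card := by
    have swap : ∑ y ∈ Bf, (Df.filter (fun x => y * x ∈ D)).card
        = ∑ x ∈ Df, (Bf.filter (fun y => y * x ∈ D)).card := by
      simp only [Finset.card_filter]
      rw [Finset.sum_comm]
    rw [swap]
    refine (Finset.sum_le_sum fun x _ => ?_).trans (by rw [Finset.sum_const, smul_eq_mul])
    refine Finset.card_le_card_of_injOn (fun y => y * x) ?_ ?_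
    · intro y hy
      simp only [Finset.mem_coe, Finset.mem_filter] at hy
      simpa [hDf] using hy.2
    · intro a _ b _ hab
      exact mul_right_cancel hab
  have hBne : Bf.Nonempty := ⟨1, by simp [hBf, one_mem_wordBall]⟩
  by_contra hcon
  push_neg at hcon
  have hcon' : ∀ y ∈ Bf, (Df.card : ℝ) < lam * ((Df.filter (fun x => y * x ∈ D)).card : ℝ) := by
    intro y hy
    have := hcon y (by simpa [hBf] using hy)
    rwa [hDcard] at this
  have hlt : (Bf.card : ℝ) * Df.card < lam * (Df.card * Df.card) := by
    calc (Bf.card : ℝ) * Df.card = ∑ _y ∈ Bf, (Df.card : ℝ) := by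
          rw [Finset.sum_const, nsmul_eq_mul]
      _ < ∑ y ∈ Bf, lam * ((Df.filter (fun x => y * x ∈ D)).card : ℝ) :=
          Finset.sum_lt_sum_of_nonempty hBne hcon'
      _ = lam * ∑ y ∈ Bf, ((Df.filter (fun x => y * x ∈ D)).card : ℝ) := by
          rw [Finset.mul_sum]
      _ ≤ lam * (Df.card * Df.card) := by
          refine mul_le_mul_of_nonneg_left ?_ hlam.le
          exact_mod_cast hsum
  have hge : lam * ((Df.card : ℝ) * Df.card) ≤ (Bf.card : ℝ) * Df.card := by
    have h1 : lam * (Df.card : ℝ) ≤ (Bf.card : ℝ) := by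
      rwa [hDcard, hBcard] at hn
    calc lam * ((Df.card : ℝ) * Df.card) = (lam * Df.card) * Df.card := by ring
      _ ≤ (Bf.card : ℝ) * Df.card := mul_le_mul_of_nonneg_right h1 (Nat.cast_nonneg _)
  exact absurd hlt (not_lt.2 hge)

end Aux

theorem stmt_16 {G : Type*} [Group G] (S : Set G) (hSfin : S.Finite)
    (hSsym : ∀ s ∈ S, s⁻¹ ∈ S) (hSgen : Subgroup.closure S = ⊤)
    (D : Set G) (hDfin : D.Finite) (hDne : D.Nonempty)
    (lam : ℝ) (hlam : 1 < lam)
    (hcard : Finite G → lam * (D.ncard : ℝ) ≤ (Nat.card G : ℝ)) :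
    ((extBoundary S D).ncard : ℝ) ≥
      (1 - 1 / lam) * (D.ncard : ℝ) / (phiS S (lam * (D.ncard : ℝ)) : ℝ) := by
  classical
  have hlam0 : (0 : ℝ) < lam := lt_trans one_pos hlam
  set t := lam * (D.ncard : ℝ) with ht
  set n := phiS S t with hn
  have hne : {m | t ≤ (growth S m : ℝ)}.Nonempty := growth_exists hSfin hSsym hSgen t hcard
  have hmem : t ≤ (growth S n : ℝ) := Nat.sInf_mem hne
  obtain ⟨y, hyB, hy⟩ := counting (wordBall_finite hSfin n) hDfin hlam0 hmem
  set cntF := hDfin.toFinset.filter (fun x => y * x ∈ D) with hcntF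
  -- |yD \ D| = |D| - cnt
  set E := (fun x => y * x) '' D \ D with hE
  have hyD : ((fun x => y * x) '' D).ncard = D.ncard :=
    Set.ncard_image_of_injective _ (mul_right_injective y)
  have hinter : ((fun x => y * x) '' D ∩ D) = (fun x => y * x) '' {x ∈ D | y * x ∈ D} := by
    ext z
    constructor
    · rintro ⟨⟨x, hx, rfl⟩, hz⟩
      exact ⟨x, ⟨hx, hz⟩, rfl⟩
    · rintro ⟨x, ⟨hx, hyx⟩, rfl⟩
      exact ⟨⟨x, hx, rfl⟩, hyx⟩
  have hsetF : {x ∈ D | y * x ∈ D} = (cntF : Set G) := by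
    ext x
    simp [hcntF, Set.Finite.mem_toFinset]
  have hinterCard : ((fun x => y * x) '' D ∩ D).ncard = cntF.card := by
    rw [hinter, Set.ncard_image_of_injective _ (mul_right_injective y), hsetF,
      Set.ncard_coe_finset]
  have hsplit : ((fun x => y * x) '' D ∩ D).ncard + E.ncard = D.ncard := by
    rw [← hyD]
    exact Set.ncard_inter_add_ncard_diff_eq_ncard _ _ (hDfin.image _)
  have hEcard : (E.ncard : ℝ) = (D.ncard : ℝ) - (cntF.card : ℝ) := by
    have : (cntF.card : ℝ) + (E.ncard : ℝ) = (D.ncard : ℝ) := by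
      rw [← hinterCard]
      exact_mod_cast congrArg Nat.cast hsplit
    linarith
  -- telescoping bound
  obtain ⟨l, hlen, hlS, hprod⟩ := hyB
  have htel : E.ncard ≤ n * (extBoundary S D).ncard := by
    calc E.ncard ≤ l.length * (extBoundary S D).ncard := by
          rw [hE, ← hprod]; exact telescope hSfin hDfin hSsym l hlS
      _ ≤ n * (extBoundary S D).ncard := Nat.mul_le_mul_right _ hlen
  -- combine over ℝ
  have hDpos : (0 : ℝ) < (D.ncard : ℝ) := by
    have := Set.ncard_pos hDfin |>.2 hDne
    exact_mod_cast this
  have hkey : (1 - 1 / lam) * (D.ncard : ℝ) ≤ (n : ℝ) * ((extBoundary S D).ncard : ℝ) := by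
    have hcnt : (cntF.card : ℝ) ≤ (D.ncard : ℝ) / lam := by
      rw [le_div_iff₀ hlam0]
      linarith
    have h1 : (1 - 1 / lam) * (D.ncard : ℝ) ≤ (E.ncard : ℝ) := by
      rw [hEcard]
      have : (D.ncard : ℝ) / lam = (1 / lam) * (D.ncard : ℝ) := by ring
      nlinarith
    have h2 : (E.ncard : ℝ) ≤ (n : ℝ) * ((extBoundary S D).ncard : ℝ) := by
      exact_mod_cast htel
    linarith
  rcases Nat.eq_zero_or_pos n with h0 | hpos
  · rw [h0]
    simp only [Nat.cast_zero, div_zero, ge_iff_le]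
    positivity
  · rw [ge_iff_le, div_le_iff₀ (by exact_mod_cast hpos)]
    linarith
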